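/- Fix an integer n ≥ 1. For each odd prime p and each a ∈ 𝔽_p let e_p(a) = exp(2πi·ã/p), where ã ∈ {0,…,p−1} is the integer representative of a. For each triple (M, b, c) with M a symmetric invertible n×n matrix over 𝔽_p, b ∈ 𝔽_p^n and c ∈ 𝔽_p, set S(M,b,c;p) = p^{−n/2}·∑_{x ∈ 𝔽_p^n} e_p(xᵀMx + bᵀx + c) ∈ ℂ. Then each S(M,b,c;p) has modulus 1, and the families (S(M,b,c;p))_{(M,b,c)} become equidistributed in the unit circle with respect to the Haar probability measure as p → ∞: for every continuous function φ : ℂ → ℂ, the average of φ(S(M,b,c;p)) over all such triples (M, b, c) converges, as p tends to infinity through primes, to the integral of φ over the unit circle {z ∈ ℂ : |z| = 1} against its Haar (rotation-invariant) probability measure. -/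

import Mathlib

open MeasureTheory Filter

noncomputable instance : MeasurableSpace Circle := borel _
instance : BorelSpace Circle := ⟨rfl⟩

/-- The normalized quadratic exponential sum
`S(M,b,c;p) = p^{-n/2} ∑_{x ∈ 𝔽_p^n} e_p(xᵀMx + bᵀx + c)`, where
`e_p(a) = exp(2πi·ã/p)` with `ã ∈ {0,…,p−1}` the integer representative of `a`. -/
noncomputable def quadExpSum (n p : ℕ) [Fact p.Prime]
    (M : Matrix (Fin n) (Fin n) (ZMod p)) (b : Fin n → ZMod p) (c : ZMod p) : ℂ :=
  (∑ x : Fin n → ZMod p,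
      Complex.exp (2 * Real.pi * Complex.I *
        (((dotProduct x (M.mulVec x) + dotProduct b x + c).val : ℕ) : ℂ) / p)) /
    (((p : ℝ) ^ ((n : ℝ) / 2) : ℝ) : ℂ)

/-- The set of triples `(M,b,c)` with `M` symmetric invertible, as a finset. -/
noncomputable def quadTriples (n p : ℕ) [Fact p.Prime] :
    Finset (Matrix (Fin n) (Fin n) (ZMod p) × (Fin n → ZMod p) × ZMod p) :=
  Finset.univ.filter (fun t => t.1.IsSymm ∧ IsUnit t.1.det)

namespace QuadAux

open Complex Finset


noncomputable def ep (p : ℕ) (a : ZMod p) : ℂ :=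
  Complex.exp (2 * Real.pi * Complex.I * ((a.val : ℕ) : ℂ) / p)

lemma ep_natCast (p : ℕ) [NeZero p] (m : ℕ) :
    ep p (m : ZMod p) = Complex.exp (2 * Real.pi * Complex.I * m / p) := by
  have key : ((m % p : ℕ) : ℂ) + ((m / p : ℕ) : ℂ) * p = m := by
    exact_mod_cast congrArg (Nat.cast : ℕ → ℂ) (Nat.mod_add_div' m p)
  have hp : (p : ℂ) ≠ 0 := Nat.cast_ne_zero.mpr (NeZero.ne p)
  have h : (2 * Real.pi * Complex.I * m / p) =
      2 * Real.pi * Complex.I * ((m % p : ℕ) : ℂ) / p +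
        ((m / p : ℕ) : ℕ) * (2 * Real.pi * Complex.I) := by
    field_simp
    rw [← key]; ring
  rw [ep, ZMod.val_natCast, h, Complex.exp_add, Complex.exp_nat_mul,
    Complex.exp_two_pi_mul_I, one_pow, mul_one]

lemma ep_add (p : ℕ) [NeZero p] (a b : ZMod p) : ep p (a + b) = ep p a * ep p b := by
  have ha : ((a.val : ℕ) : ZMod p) = a := ZMod.natCast_rightInverse a
  have hb : ((b.val : ℕ) : ZMod p) = b := ZMod.natCast_rightInverse b
  have h1 : ep p (a + b) = ep p (((a.val + b.val : ℕ) : ZMod p)) := by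
    rw [Nat.cast_add, ha, hb]
  rw [h1, ep_natCast, ep, ep, ← Complex.exp_add]
  congr 1
  push_cast
  ring

lemma ep_zero (p : ℕ) : ep p 0 = 1 := by
  simp [ep, ZMod.val_zero]

lemma abs_ep (p : ℕ) (a : ZMod p) : ‖(ep p a)‖ = 1 := by
  have h : (2 * Real.pi * Complex.I * ((a.val : ℕ) : ℂ) / p)
      = ((2 * Real.pi * a.val / p : ℝ) : ℂ) * Complex.I := by
    push_cast; ring
  rw [ep, h, Complex.norm_exp_ofReal_mul_I]

lemma conj_ep (p : ℕ) [NeZero p] (a : ZMod p) :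
    (starRingEnd ℂ) (ep p a) = ep p (-a) := by
  have h1 : ep p a * ep p (-a) = 1 := by
    rw [← ep_add]; simp [ep_zero]
  have h2 : ep p a * (starRingEnd ℂ) (ep p a) = 1 := by
    rw [Complex.mul_conj]
    norm_cast
    rw [Complex.normSq_eq_norm_sq, abs_ep]; norm_num
  rw [eq_inv_of_mul_eq_one_right h2, eq_inv_of_mul_eq_one_right h1]

lemma ep_sum (p : ℕ) [NeZero p] {ι : Type*} (s : Finset ι) (f : ι → ZMod p) :
    ep p (∑ i ∈ s, f i) = ∏ i ∈ s, ep p (f i) := by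
  classical
  induction s using Finset.induction_on with
  | empty => simp [ep_zero]
  | insert _ _ h ih => rw [Finset.sum_insert h, Finset.prod_insert h, ep_add, ih]

lemma sum_ep (p : ℕ) [NeZero p] (hp : 1 < p) : ∑ a : ZMod p, ep p a = 0 := by
  have hp0 : (p : ℂ) ≠ 0 := by exact_mod_cast (by omega : p ≠ 0)
  have hstep : ∑ a : ZMod p, ep p a
      = ∑ k ∈ Finset.range p, Complex.exp (2 * Real.pi * Complex.I / p) ^ k := by
    refine Finset.sum_nbij' (fun a => a.val) (fun k => (k : ZMod p)) ?_ ?_ ?_ ?_ ?_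
    · intro a _; exact Finset.mem_range.mpr (ZMod.val_lt a)
    · intro k _; exact Finset.mem_univ _
    · intro a _; exact ZMod.natCast_rightInverse a
    · intro k hk
      show ((k : ZMod p)).val = k
      rw [ZMod.val_natCast, Nat.mod_eq_of_lt (Finset.mem_range.mp hk)]
    · intro a _
      rw [ep, ← Complex.exp_nat_mul]
      congr 1
      ring
  have hne1 : Complex.exp (2 * Real.pi * Complex.I / p) ≠ 1 := by
    intro h
    obtain ⟨m, hm⟩ := Complex.exp_eq_one_iff.mp h
    have h2 : (2 * Real.pi * Complex.I) ≠ 0 := by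
      simp [Real.pi_ne_zero, Complex.I_ne_zero, Complex.ofReal_ne_zero]
    have hmul : (2 * Real.pi * Complex.I) * ((1 : ℂ) / p)
        = (2 * Real.pi * Complex.I) * (m : ℂ) := by
      rw [mul_one_div, hm]; ring
    have h3 : (1 : ℂ) / p = m := mul_left_cancel₀ h2 hmul
    have h4 : (1 : ℂ) = m * p := (div_eq_iff hp0).mp h3
    have hint : (m * p : ℤ) = 1 := by exact_mod_cast h4.symm
    have hdvd : (p : ℤ) ∣ 1 := ⟨m, by linarith⟩
    have := Int.le_of_dvd one_pos hdvd
    omega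
  have hpow : Complex.exp (2 * Real.pi * Complex.I / p) ^ p = 1 := by
    rw [← Complex.exp_nat_mul, mul_div_cancel₀ _ hp0, Complex.exp_two_pi_mul_I]
  rw [hstep, geom_sum_eq hne1, hpow, sub_self, zero_div]


open Matrix in
lemma sum_ep_mul (p : ℕ) [Fact p.Prime] {a : ZMod p} (ha : a ≠ 0) :
    ∑ t : ZMod p, ep p (a * t) = 0 := by
  haveI : NeZero p := ⟨(Fact.out : p.Prime).ne_zero⟩
  have := Fintype.sum_equiv (Equiv.mulLeft₀ a ha) (fun t => ep p (a * t)) (ep p)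
    (fun t => rfl)
  rw [this]
  exact sum_ep p (Fact.out : p.Prime).one_lt

open Matrix in
lemma sum_ep_dot (n p : ℕ) [Fact p.Prime] {v : Fin n → ZMod p} (hv : v ≠ 0) :
    ∑ y : Fin n → ZMod p, ep p (v ⬝ᵥ y) = 0 := by
  haveI : NeZero p := ⟨(Fact.out : p.Prime).ne_zero⟩
  have h1 : ∀ y : Fin n → ZMod p, ep p (v ⬝ᵥ y) = ∏ i, ep p (v i * y i) := fun y =>
    ep_sum p Finset.univ (fun i => v i * y i)
  rw [Finset.sum_congr rfl (fun y _ => h1 y),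
    ← Fintype.prod_sum (fun (i : Fin n) (j : ZMod p) => ep p (v i * j))]
  obtain ⟨i, hi⟩ := Function.ne_iff.mp hv
  exact Finset.prod_eq_zero (Finset.mem_univ i) (sum_ep_mul p hi)

open Matrix in
lemma gauss_key (n p : ℕ) [Fact p.Prime] (hp2 : p ≠ 2)
    (M : Matrix (Fin n) (Fin n) (ZMod p)) (b : Fin n → ZMod p) (c : ZMod p)
    (hM : M.IsSymm) (hdet : IsUnit M.det) :
    (∑ x : Fin n → ZMod p, ep p (x ⬝ᵥ M *ᵥ x + b ⬝ᵥ x + c)) *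
      (starRingEnd ℂ) (∑ x : Fin n → ZMod p, ep p (x ⬝ᵥ M *ᵥ x + b ⬝ᵥ x + c)) =
    ((p : ℂ)) ^ n := by
  haveI : NeZero p := ⟨(Fact.out : p.Prime).ne_zero⟩
  set f : (Fin n → ZMod p) → ZMod p := fun x => x ⬝ᵥ M *ᵥ x + b ⬝ᵥ x + c with hf
  have htwo : (2 : ZMod p) ≠ 0 := by
    intro h
    have h' : ((2 : ℕ) : ZMod p) = 0 := by exact_mod_cast h
    have := (ZMod.natCast_eq_zero_iff 2 p).mp h'
    have := Nat.le_of_dvd (by norm_num) this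
    have := (Fact.out : p.Prime).two_le
    omega
  have hMinj : ∀ h : Fin n → ZMod p, M *ᵥ h = 0 → h = 0 := by
    intro h hh
    have := congrArg (fun w => M⁻¹ *ᵥ w) hh
    simpa [Matrix.mulVec_mulVec, Matrix.nonsing_inv_mul M hdet, Matrix.mulVec_zero,
      Matrix.one_mulVec] using this
  -- expand conj
  have hconj : (starRingEnd ℂ) (∑ x : Fin n → ZMod p, ep p (f x))
      = ∑ y : Fin n → ZMod p, ep p (-(f y)) := by
    rw [map_sum]
    exact Finset.sum_congr rfl fun y _ => conj_ep p (f y)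
  rw [hconj, Finset.sum_mul_sum]
  have hsplit : ∀ x y : Fin n → ZMod p, ep p (f x) * ep p (-(f y)) = ep p (f x - f y) := by
    intro x y
    rw [← ep_add]
    congr 1
    ring
  rw [Finset.sum_congr rfl fun x _ => Finset.sum_congr rfl fun y _ => hsplit x y]
  rw [Finset.sum_comm]
  -- reindex x = y + h
  have hreindex : ∀ y : Fin n → ZMod p,
      (∑ x : Fin n → ZMod p, ep p (f x - f y))
        = ∑ h : Fin n → ZMod p, ep p (f (y + h) - f y) :=
    fun y => (Equiv.sum_comp (Equiv.addLeft y) (fun x => ep p (f x - f y))).symm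
  rw [Finset.sum_congr rfl fun y _ => hreindex y, Finset.sum_comm]
  -- the pointwise expansion
  have hexp : ∀ h y : Fin n → ZMod p,
      f (y + h) - f y = (h ⬝ᵥ M *ᵥ h + b ⬝ᵥ h) + ((2 : ZMod p) • (M *ᵥ h)) ⬝ᵥ y := by
    intro h y
    have hsym : h ⬝ᵥ M *ᵥ y = (M *ᵥ h) ⬝ᵥ y := by
      rw [Matrix.dotProduct_mulVec]
      congr 1
      conv_rhs => rw [← hM.eq]
      rw [Matrix.mulVec_transpose]
    simp only [hf, Matrix.mulVec_add, add_dotProduct, dotProduct_add,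
      smul_dotProduct, smul_eq_mul, hsym]
    have := dotProduct_comm y (M *ᵥ h)
    ring_nf
    rw [dotProduct_comm y (M *ᵥ h)]
    ring
  rw [Finset.sum_congr rfl fun h _ => Finset.sum_congr rfl fun y _ =>
    congrArg (ep p) (hexp h y)]
  -- inner sums vanish except at h = 0
  have hterm : ∀ h : Fin n → ZMod p,
      (∑ y : Fin n → ZMod p, ep p ((h ⬝ᵥ M *ᵥ h + b ⬝ᵥ h) + ((2 : ZMod p) • (M *ᵥ h)) ⬝ᵥ y))
        = if h = 0 then ((p : ℂ)) ^ n else 0 := by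
    intro h
    by_cases h0 : h = 0
    · subst h0
      simp [ep_zero, Finset.card_univ, ZMod.card]
    · rw [if_neg h0]
      have hv : (2 : ZMod p) • (M *ᵥ h) ≠ 0 := by
        intro hcon
        rcases smul_eq_zero.mp hcon with h2 | hMh
        · exact htwo h2
        · exact h0 (hMinj h hMh)
      calc (∑ y : Fin n → ZMod p,
            ep p ((h ⬝ᵥ M *ᵥ h + b ⬝ᵥ h) + ((2 : ZMod p) • (M *ᵥ h)) ⬝ᵥ y))
          = ep p (h ⬝ᵥ M *ᵥ h + b ⬝ᵥ h) *
            ∑ y : Fin n → ZMod p, ep p (((2 : ZMod p) • (M *ᵥ h)) ⬝ᵥ y) := by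
            rw [Finset.mul_sum]
            exact Finset.sum_congr rfl fun y _ => ep_add p _ _
        _ = 0 := by rw [sum_ep_dot n p hv, mul_zero]
  rw [Finset.sum_congr rfl fun h _ => hterm h]
  simp


open Matrix in
lemma abs_gauss (n p : ℕ) [Fact p.Prime] (hp2 : p ≠ 2)
    (M : Matrix (Fin n) (Fin n) (ZMod p)) (b : Fin n → ZMod p) (c : ZMod p)
    (hM : M.IsSymm) (hdet : IsUnit M.det) :
    ‖(∑ x : Fin n → ZMod p, ep p (x ⬝ᵥ M *ᵥ x + b ⬝ᵥ x + c))‖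
      = (p : ℝ) ^ ((n : ℝ) / 2) := by
  set G := ∑ x : Fin n → ZMod p, ep p (x ⬝ᵥ M *ᵥ x + b ⬝ᵥ x + c) with hG
  have key := gauss_key n p hp2 M b c hM hdet
  have habs : ‖G‖ ^ 2 = (p : ℝ) ^ n := by
    have : ‖G * (starRingEnd ℂ) G‖ = ‖(p : ℂ) ^ n‖ := by rw [key]
    rwa [norm_mul, Complex.norm_conj, ← sq, norm_pow, Complex.norm_natCast] at this
  have hpnn : (0 : ℝ) ≤ (p : ℝ) := Nat.cast_nonneg p
  have h2 : ((p : ℝ) ^ ((n : ℝ) / 2)) ^ 2 = (p : ℝ) ^ n := by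
    rw [← Real.rpow_natCast ((p : ℝ) ^ ((n : ℝ) / 2)) 2, ← Real.rpow_mul hpnn]
    rw [show (n : ℝ) / 2 * (2 : ℕ) = (n : ℝ) by push_cast; ring]
    exact Real.rpow_natCast _ n
  nlinarith [norm_nonneg G, Real.rpow_nonneg hpnn ((n : ℝ) / 2),
    habs, h2]

end QuadAux

open QuadAux Matrix in
lemma quadExpSum_eq (n p : ℕ) [Fact p.Prime]
    (M : Matrix (Fin n) (Fin n) (ZMod p)) (b : Fin n → ZMod p) (c : ZMod p) :
    quadExpSum n p M b c
      = (∑ x : Fin n → ZMod p, ep p (x ⬝ᵥ M *ᵥ x + b ⬝ᵥ x + c)) /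
        (((p : ℝ) ^ ((n : ℝ) / 2) : ℝ) : ℂ) := rfl

open QuadAux in
lemma abs_quadExpSum (n p : ℕ) [Fact p.Prime] (hp2 : p ≠ 2)
    (M : Matrix (Fin n) (Fin n) (ZMod p)) (b : Fin n → ZMod p) (c : ZMod p)
    (hM : M.IsSymm) (hdet : IsUnit M.det) :
    ‖(quadExpSum n p M b c)‖ = 1 := by
  have hpos : (0 : ℝ) < (p : ℝ) ^ ((n : ℝ) / 2) :=
    Real.rpow_pos_of_pos (by exact_mod_cast (Fact.out : p.Prime).pos) _
  rw [quadExpSum_eq, norm_div, abs_gauss n p hp2 M b c hM hdet, Complex.norm_real, Real.norm_eq_abs,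
    abs_of_pos hpos, div_self hpos.ne']

open QuadAux Matrix in
lemma quadExpSum_shift (n p : ℕ) [Fact p.Prime]
    (M : Matrix (Fin n) (Fin n) (ZMod p)) (b : Fin n → ZMod p) (c : ZMod p) :
    quadExpSum n p M b c = ep p c * quadExpSum n p M b 0 := by
  haveI : NeZero p := ⟨(Fact.out : p.Prime).ne_zero⟩
  rw [quadExpSum_eq, quadExpSum_eq, ← mul_div_assoc, Finset.mul_sum]
  congr 1
  refine Finset.sum_congr rfl fun x _ => ?_
  rw [← ep_add]
  congr 1
  ring

namespace QuadAux

noncomputable def epc (p : ℕ) (a : ZMod p) : Circle :=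
  Circle.exp (2 * Real.pi * a.val / p)

lemma coe_epc (p : ℕ) (a : ZMod p) : ((epc p a : Circle) : ℂ) = ep p a := by
  rw [epc, Circle.coe_exp, ep]
  congr 1
  push_cast
  ring

lemma epc_natCast (p : ℕ) [NeZero p] (k : ℕ) :
    epc p ((k : ℕ) : ZMod p) = Circle.exp (2 * Real.pi * k / p) := by
  rw [epc, ZMod.val_natCast]
  have hp : (p : ℝ) ≠ 0 := Nat.cast_ne_zero.mpr (NeZero.ne p)
  have hk : (k : ℝ) = ((k % p : ℕ) : ℝ) + ((k / p : ℕ) : ℝ) * p := by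
    exact_mod_cast (congrArg (Nat.cast : ℕ → ℝ) (Nat.mod_add_div' k p)).symm
  have harg : 2 * Real.pi * (k : ℝ) / p
      = 2 * Real.pi * ((k % p : ℕ) : ℝ) / p + ((k / p : ℕ) : ℝ) * (2 * Real.pi) := by
    rw [hk]; field_simp
  rw [harg]
  exact ((Circle.periodic_exp.nat_mul (k / p)) (2 * Real.pi * ((k % p : ℕ) : ℝ) / p)).symm

lemma epc_add (p : ℕ) [NeZero p] (a b : ZMod p) :
    epc p (a + b) = epc p a * epc p b := by
  apply Circle.coe_injective
  rw [Circle.coe_mul, coe_epc, coe_epc, coe_epc, ep_add]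

end QuadAux

namespace QuadAux

open Complex

lemma avg_close (φ : ℂ → ℂ) (hφ : Continuous φ)
    (μ : Measure Circle) (hHaar : μ.IsHaarMeasure) (hprob : IsProbabilityMeasure μ)
    {ε : ℝ} (hε : 0 < ε) :
    ∃ P : ℕ, ∀ p : ℕ, P ≤ p → ∀ (hp : p.Prime) (z : Circle),
        letI : NeZero p := ⟨hp.ne_zero⟩
        ‖((∑ c : ZMod p, φ (((z * epc p c : Circle)) : ℂ))
            - (p : ℂ) * ∫ w : Circle, φ (w : ℂ) ∂μ)‖ ≤ p * ε := by
  haveI := hHaar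
  haveI := hprob
  set g : Circle → ℂ := fun w => φ (w : ℂ) with hgdef
  have hgc : Continuous g := hφ.comp continuous_subtype_val
  have hunif := CompactSpace.uniformContinuous_of_continuous hgc
  obtain ⟨δ, hδ0, hδ⟩ := Metric.uniformContinuous_iff.mp hunif ε hε
  refine ⟨max (⌈4 * Real.pi / δ⌉₊ + 1) 13, ?_⟩
  intro p hp hpprime z
  haveI : Fact p.Prime := ⟨hpprime⟩
  haveI : NeZero p := ⟨hpprime.ne_zero⟩
  have hp13 : (13 : ℕ) ≤ p := le_trans (le_max_right _ _) hp
  have hppos : (0 : ℝ) < p := by exact_mod_cast hpprime.pos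
  have hπpos := Real.pi_pos
  have hceil : (⌈4 * Real.pi / δ⌉₊ + 1 : ℕ) ≤ p := le_trans (le_max_left _ _) hp
  have h4πδ : 4 * Real.pi / δ < p := by
    calc 4 * Real.pi / δ ≤ (⌈4 * Real.pi / δ⌉₊ : ℝ) := Nat.le_ceil _
    _ < (⌈4 * Real.pi / δ⌉₊ + 1 : ℕ) := by push_cast; linarith
    _ ≤ p := by exact_mod_cast hceil
  have h4π : 4 * Real.pi / p < δ := by
    rw [div_lt_iff₀ hppos]
    rw [div_lt_iff₀ hδ0] at h4πδ
    linarith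
  have h2πp1 : 2 * Real.pi / p ≤ 1 := by
    rw [div_le_one hppos]
    have := Real.pi_le_four
    have : (13 : ℝ) ≤ p := by exact_mod_cast hp13
    linarith [Real.pi_le_four]
  -- the averaged function
  set Fsum : Circle → ℂ := fun v => ∑ c : ZMod p, g (v * epc p c) with hFdef
  have hFinv : ∀ (v : Circle) (c₀ : ZMod p), Fsum (v * epc p c₀) = Fsum v := by
    intro v c₀
    show (∑ c : ZMod p, g (v * epc p c₀ * epc p c)) = ∑ c : ZMod p, g (v * epc p c)
    rw [← Equiv.sum_comp (Equiv.addLeft c₀) (fun c => g (v * epc p c))]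
    refine Finset.sum_congr rfl fun c _ => ?_
    show g (v * epc p c₀ * epc p c) = g (v * epc p (c₀ + c))
    rw [epc_add, mul_assoc]
  -- pairwise closeness of Fsum values
  have hFF : ∀ v w : Circle, ‖(Fsum v - Fsum w)‖ ≤ p * ε := by
    intro v w
    set s : Circle := w / v with hsdef
    obtain ⟨θ, hθ0, hθlt, hθs⟩ : ∃ θ : ℝ, 0 ≤ θ ∧ θ < 2 * Real.pi ∧ Circle.exp θ = s := by
      rcases le_or_gt 0 (Complex.arg (s : ℂ)) with h | h
      · exact ⟨Complex.arg (s : ℂ), h,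
          lt_of_le_of_lt (Complex.arg_le_pi _) (by linarith), Circle.exp_arg s⟩
      · refine ⟨Complex.arg (s : ℂ) + 2 * Real.pi,
          by linarith [Complex.neg_pi_lt_arg (s : ℂ)], by linarith, ?_⟩
        rw [Circle.exp_add_two_pi]
        exact Circle.exp_arg s
    set t : ℝ := θ * p / (2 * Real.pi) with htdef
    set k : ℕ := ⌊t⌋₊ with hkdef
    have ht0 : 0 ≤ t := by positivity
    have hk1 : (k : ℝ) ≤ t := Nat.floor_le ht0
    have hk2 : t < k + 1 := Nat.lt_floor_add_one t
    set t₀ : ℝ := θ - 2 * Real.pi * k / p with ht₀def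
    have ht₀eq : t₀ = (2 * Real.pi / p) * (t - k) := by
      rw [ht₀def, htdef]
      field_simp
    have ht₀0 : 0 ≤ t₀ := by
      rw [ht₀eq]
      have h2 : (0:ℝ) < 2 * Real.pi / p := by positivity
      nlinarith
    have ht₀lt : t₀ < 2 * Real.pi / p := by
      rw [ht₀eq]
      have h1 : t - k < 1 := by linarith
      have h2 : 0 < 2 * Real.pi / p := by positivity
      nlinarith
    set s₀ : Circle := Circle.exp t₀ with hs₀def
    have hsplit : s = epc p ((k : ℕ) : ZMod p) * s₀ := by
      rw [epc_natCast, hs₀def, ← Circle.exp_add, ← hθs]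
      congr 1
      rw [ht₀def]; ring
    have hs₀close : ‖((s₀ : ℂ) - 1)‖ < δ := by
      rw [hs₀def, Circle.coe_exp]
      have habs : ‖((t₀ : ℂ) * Complex.I)‖ = |t₀| := by
        rw [norm_mul, Complex.norm_I, Complex.norm_real, Real.norm_eq_abs, mul_one]
      have hle1 : ‖((t₀ : ℂ) * Complex.I)‖ ≤ 1 := by
        rw [habs, _root_.abs_of_nonneg ht₀0]
        exact le_trans ht₀lt.le h2πp1
      calc ‖(Complex.exp ((t₀ : ℂ) * Complex.I) - 1)‖
          ≤ 2 * ‖((t₀ : ℂ) * Complex.I)‖ := Complex.norm_exp_sub_one_le hle1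
        _ = 2 * |t₀| := by rw [habs]
        _ ≤ 2 * (2 * Real.pi / p) := by
            rw [_root_.abs_of_nonneg ht₀0]
            exact mul_le_mul_of_nonneg_left ht₀lt.le (by norm_num)
        _ = 4 * Real.pi / p := by ring
        _ < δ := h4π
    have hw : w = v * s := by
      rw [hsdef, mul_comm, div_eq_mul_inv, inv_mul_cancel_right]
    have hFw : Fsum w = Fsum (v * s₀) := by
      rw [hw, hsplit, show v * (epc p ((k : ℕ) : ZMod p) * s₀)
        = (v * s₀) * epc p ((k : ℕ) : ZMod p) by
          rw [mul_comm (epc p _) s₀, ← mul_assoc], hFinv]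
    rw [hFw]
    have hsub : Fsum v - Fsum (v * s₀)
        = ∑ c : ZMod p, (g (v * epc p c) - g (v * s₀ * epc p c)) := by
      rw [Finset.sum_sub_distrib]
    rw [hsub]
    calc ‖(∑ c : ZMod p, (g (v * epc p c) - g (v * s₀ * epc p c)))‖
        ≤ ∑ c : ZMod p, ‖(g (v * epc p c) - g (v * s₀ * epc p c))‖ :=
          norm_sum_le _ _
      _ ≤ ∑ _c : ZMod p, ε := by
          refine Finset.sum_le_sum fun c _ => ?_
          have hdist : dist (v * epc p c) (v * s₀ * epc p c) < δ := by
            have : dist (v * epc p c) (v * s₀ * epc p c)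
                = ‖(((v * epc p c : Circle) : ℂ)
                    - ((v * s₀ * epc p c : Circle) : ℂ))‖ := by
              rw [← Complex.dist_eq]; exact Subtype.dist_eq _ _
            rw [this]
            have hfac : ((v * epc p c : Circle) : ℂ) - ((v * s₀ * epc p c : Circle) : ℂ)
                = ((v * epc p c : Circle) : ℂ) * (1 - (s₀ : ℂ)) := by
              push_cast
              ring
            rw [hfac, norm_mul]
            have h1 : ‖((v * epc p c : Circle) : ℂ)‖ = 1 := Circle.norm_coe _
            rw [h1, one_mul, norm_sub_rev]
            exact hs₀close
          have := hδ hdist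
          rw [Complex.dist_eq] at this
          exact le_of_lt this
      _ = p * ε := by
          rw [Finset.sum_const, Finset.card_univ, ZMod.card, nsmul_eq_mul]
  -- integrability facts
  have hHCS : ∀ f : Circle → ℂ, HasCompactSupport f := fun f =>
    IsCompact.of_isClosed_subset isCompact_univ (isClosed_tsupport f) (Set.subset_univ _)
  have hint_g : Integrable g μ := hgc.integrable_of_hasCompactSupport (hHCS g)
  have hFcont : Continuous Fsum :=
    continuous_finset_sum _ fun c _ => hgc.comp (continuous_id.mul continuous_const)
  have hFint : Integrable Fsum μ := hFcont.integrable_of_hasCompactSupport (hHCS Fsum)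
  have hFmean : ∫ w, Fsum w ∂μ = (p : ℂ) * ∫ w, g w ∂μ := by
    have hshift : ∀ c : ZMod p, (∫ w, g (w * epc p c) ∂μ) = ∫ w, g w ∂μ := by
      intro c
      have heq : (fun w : Circle => g (w * epc p c)) = fun w : Circle => g (epc p c * w) := by
        funext w; rw [mul_comm]
      rw [heq]
      exact integral_mul_left_eq_self g (epc p c)
    calc ∫ w, Fsum w ∂μ = ∫ w, ∑ c : ZMod p, g (w * epc p c) ∂μ := rfl
      _ = ∑ c : ZMod p, ∫ w, g (w * epc p c) ∂μ :=
          integral_finset_sum Finset.univ (fun c _ =>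
            show Integrable (fun w : Circle => g (w * epc p c)) μ from
              ((hgc.comp (continuous_id.mul continuous_const)).integrable_of_hasCompactSupport
                (hHCS _)))
      _ = ∑ _c : ZMod p, ∫ w, g w ∂μ := Finset.sum_congr rfl fun c _ => hshift c
      _ = (p : ℂ) * ∫ w, g w ∂μ := by
          rw [Finset.sum_const, Finset.card_univ, ZMod.card, nsmul_eq_mul]
  have hrw : (∑ c : ZMod p, φ (((z * epc p c : Circle)) : ℂ))
      - (p : ℂ) * ∫ w : Circle, φ (w : ℂ) ∂μ = ∫ w, (Fsum z - Fsum w) ∂μ := by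
    rw [integral_sub (integrable_const _) hFint, integral_const, probReal_univ,
      one_smul, hFmean]
  rw [hrw]
  have hbound := norm_integral_le_of_norm_le_const (μ := μ) (C := p * ε)
    (f := fun w => Fsum z - Fsum w) (Filter.Eventually.of_forall (fun w => by
      simpa using hFF z w))
  simpa [measure_univ] using hbound

end QuadAux

/-- Case `d = 2` of Corollary 7.9(1): each normalized quadratic exponential sum
`S(M,b,c;p)` has modulus `1`, and as `p → ∞` through (odd) primes the families
`(S(M,b,c;p))` become equidistributed in the unit circle with respect to the Haar
probability measure. -/
theorem quad_sums_equidistributed (n : ℕ) (hn : 1 ≤ n) :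
    (∀ (p : ℕ) (hp : p.Prime), p ≠ 2 →
      haveI : Fact p.Prime := ⟨hp⟩
      ∀ (M : Matrix (Fin n) (Fin n) (ZMod p)) (b : Fin n → ZMod p) (c : ZMod p),
        M.IsSymm → IsUnit M.det → ‖(quadExpSum n p M b c)‖ = 1) ∧
    (∀ φ : ℂ → ℂ, Continuous φ →
      ∀ μ : Measure Circle, μ.IsHaarMeasure → IsProbabilityMeasure μ →
        Tendsto
          (fun p : ℕ =>
            if hp : p.Prime then
              haveI : Fact p.Prime := ⟨hp⟩
              (∑ t ∈ quadTriples n p, φ (quadExpSum n p t.1 t.2.1 t.2.2)) /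
                ((quadTriples n p).card : ℂ)
            else 0)
          (atTop ⊓ 𝓟 {p : ℕ | p.Prime ∧ p ≠ 2})
          (nhds (∫ z : Circle, φ (z : ℂ) ∂μ))) := by
  constructor
  · intro p hp hp2
    haveI : Fact p.Prime := ⟨hp⟩
    intro M b c hM hdet
    exact abs_quadExpSum n p hp2 M b c hM hdet
  · intro φ hφ μ hHaar hprob
    haveI := hprob
    rw [Metric.tendsto_nhds]
    intro ε hε
    obtain ⟨P, hP⟩ := QuadAux.avg_close φ hφ μ hHaar hprob (half_pos hε)
    rw [eventually_inf_principal]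
    filter_upwards [eventually_ge_atTop P] with p hpge hpmem
    obtain ⟨hprime, hp2⟩ := hpmem
    haveI : Fact p.Prime := ⟨hprime⟩
    haveI : NeZero p := ⟨hprime.ne_zero⟩
    rw [dif_pos hprime]
    set I₀ : ℂ := ∫ z : Circle, φ (z : ℂ) ∂μ with hI₀
    set Ms : Finset (Matrix (Fin n) (Fin n) (ZMod p)) :=
      Finset.univ.filter (fun M => M.IsSymm ∧ IsUnit M.det) with hMs
    have hT : quadTriples n p
        = Ms ×ˢ (Finset.univ : Finset ((Fin n → ZMod p) × ZMod p)) := by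
      ext t
      simp [quadTriples, hMs, Finset.mem_product]
    have hMsne : Ms.Nonempty := ⟨1, by simp [hMs, Matrix.isSymm_one]⟩
    have hMscard : 0 < Ms.card := Finset.card_pos.mpr hMsne
    have hppos : 0 < p := hprime.pos
    have hbcard : Fintype.card ((Fin n → ZMod p) × ZMod p) = p ^ n * p := by
      simp [ZMod.card]
    have hcard : (quadTriples n p).card = Ms.card * (p ^ n * p) := by
      rw [hT, Finset.card_product, Finset.card_univ, hbcard]
    have hcardpos : 0 < (quadTriples n p).card := by
      rw [hcard]; positivity
    -- decompose the sum
    have hsum : (∑ t ∈ quadTriples n p, φ (quadExpSum n p t.1 t.2.1 t.2.2))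
        = ∑ M ∈ Ms, ∑ bc : (Fin n → ZMod p) × ZMod p, φ (quadExpSum n p M bc.1 bc.2) := by
      rw [hT, Finset.sum_product]
    -- per-pair bound
    have hinner : ∀ M ∈ Ms, ∀ b : Fin n → ZMod p,
        ‖((∑ c : ZMod p, φ (quadExpSum n p M b c)) - (p : ℂ) * I₀)‖
          ≤ p * (ε / 2) := by
      intro M hMmem b
      rw [hMs, Finset.mem_filter] at hMmem
      obtain ⟨-, hsymm, hdet⟩ := hMmem
      have habs1 : ‖(quadExpSum n p M b 0)‖ = 1 :=
        abs_quadExpSum n p hp2 M b 0 hsymm hdet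
      set z : Circle := ⟨quadExpSum n p M b 0, by
        exact mem_sphere_zero_iff_norm.mpr habs1⟩ with hz
      have hrwc : ∀ c : ZMod p, quadExpSum n p M b c = ((z * QuadAux.epc p c : Circle) : ℂ) := by
        intro c
        rw [Circle.coe_mul, QuadAux.coe_epc, quadExpSum_shift n p M b c, mul_comm]
      rw [Finset.sum_congr rfl fun c _ => congrArg φ (hrwc c)]
      exact hP p hpge hprime z
    -- inner double bound
    have hmid : ∀ M ∈ Ms,
        ‖((∑ bc : (Fin n → ZMod p) × ZMod p, φ (quadExpSum n p M bc.1 bc.2))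
            - ((p ^ n * p : ℕ) : ℂ) * I₀)‖ ≤ (p ^ n * p : ℕ) * (ε / 2) := by
      intro M hMmem
      have hsplit : (∑ bc : (Fin n → ZMod p) × ZMod p, φ (quadExpSum n p M bc.1 bc.2))
          = ∑ b : Fin n → ZMod p, ∑ c : ZMod p, φ (quadExpSum n p M b c) :=
        Fintype.sum_prod_type _
      have hconst : ((p ^ n * p : ℕ) : ℂ) * I₀
          = ∑ _b : Fin n → ZMod p, ((p : ℂ) * I₀) := by
        rw [Finset.sum_const, Finset.card_univ, nsmul_eq_mul]
        have : (Fintype.card (Fin n → ZMod p) : ℂ) = (p : ℂ) ^ n := by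
          simp [ZMod.card]
        rw [this]
        push_cast
        ring
      rw [hsplit, hconst, ← Finset.sum_sub_distrib]
      refine le_trans (norm_sum_le _ _) ?_
      calc (∑ b : Fin n → ZMod p,
            ‖((∑ c : ZMod p, φ (quadExpSum n p M b c)) - (p : ℂ) * I₀)‖)
          ≤ ∑ _b : Fin n → ZMod p, ((p : ℝ) * (ε / 2)) :=
            Finset.sum_le_sum fun b _ => hinner M hMmem b
        _ = (p ^ n * p : ℕ) * (ε / 2) := by
            rw [Finset.sum_const, Finset.card_univ, nsmul_eq_mul]
            have : (Fintype.card (Fin n → ZMod p) : ℝ) = (p : ℝ) ^ n := by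
              simp [ZMod.card]
            rw [this]
            push_cast
            ring
    -- total bound
    have htot : ‖((∑ t ∈ quadTriples n p, φ (quadExpSum n p t.1 t.2.1 t.2.2))
        - ((quadTriples n p).card : ℂ) * I₀)‖
          ≤ ((quadTriples n p).card : ℝ) * (ε / 2) := by
      have hconst2 : ((quadTriples n p).card : ℂ) * I₀
          = ∑ _M ∈ Ms, (((p ^ n * p : ℕ) : ℂ) * I₀) := by
        rw [Finset.sum_const, nsmul_eq_mul, hcard]
        push_cast
        ring
      rw [hsum, hconst2, ← Finset.sum_sub_distrib]
      refine le_trans (norm_sum_le _ _) ?_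
      calc (∑ M ∈ Ms, ‖
            ((∑ bc : (Fin n → ZMod p) × ZMod p, φ (quadExpSum n p M bc.1 bc.2))
              - ((p ^ n * p : ℕ) : ℂ) * I₀)‖)
          ≤ ∑ _M ∈ Ms, (((p ^ n * p : ℕ) : ℝ) * (ε / 2)) :=
            Finset.sum_le_sum fun M hMmem => hmid M hMmem
        _ = ((quadTriples n p).card : ℝ) * (ε / 2) := by
            rw [Finset.sum_const, nsmul_eq_mul, hcard]
            push_cast
            ring
    -- conclude
    have hcardC : ((quadTriples n p).card : ℂ) ≠ 0 :=
      Nat.cast_ne_zero.mpr hcardpos.ne'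
    have hcardR : (0 : ℝ) < ((quadTriples n p).card : ℝ) := by
      exact_mod_cast hcardpos
    rw [Complex.dist_eq]
    have hdiff : (∑ t ∈ quadTriples n p, φ (quadExpSum n p t.1 t.2.1 t.2.2)) /
          ((quadTriples n p).card : ℂ) - I₀
        = ((∑ t ∈ quadTriples n p, φ (quadExpSum n p t.1 t.2.1 t.2.2))
            - ((quadTriples n p).card : ℂ) * I₀) / ((quadTriples n p).card : ℂ) := by
      field_simp
    rw [hdiff, norm_div, Complex.norm_natCast]
    calc ‖((∑ t ∈ quadTriples n p, φ (quadExpSum n p t.1 t.2.1 t.2.2))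
          - ((quadTriples n p).card : ℂ) * I₀)‖ / ((quadTriples n p).card : ℝ)
        ≤ (((quadTriples n p).card : ℝ) * (ε / 2)) / ((quadTriples n p).card : ℝ) :=
          div_le_div_of_nonneg_right htot hcardR.le
      _ = ε / 2 := by field_simp
      _ < ε := by linarith
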